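/- If an irreducible GL(ℤ)-polynomial P has among its roots both a and a^k, for some complex number a ∉ {1, −1} and an integer k ∉ {0, 1, −1}, then every complex root of P is a root of unity. -/

import Mathlib

open Polynomial

/-- A `GL(ℤ)`-polynomial of degree `d`: integer coefficients, leading coefficient
`(-1)^d`, and constant term `1` or `-1`. -/
def IsGLZPoly (P : Polynomial ℤ) (d : ℕ) : Prop :=
  P.natDegree = d ∧ P.leadingCoeff = (-1) ^ d ∧ (P.coeff 0 = 1 ∨ P.coeff 0 = -1)

/-- If an irreducible `GL(ℤ)`-polynomial `P` has among its complex roots both `a` and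
`a^k`, for some `a ∉ {1, -1}` and an integer `k ∉ {0, 1, -1}`, then every complex root
of `P` is a root of unity. -/
lemma exists_algHom_adjoinRoot (Q : Polynomial ℚ) [Fact (Irreducible Q)] (z : ℂ)
    (hz : Polynomial.aeval z Q = 0) :
    ∃ φ : AdjoinRoot Q →ₐ[ℚ] ℂ, φ (AdjoinRoot.root Q) = z :=
  ⟨AdjoinRoot.liftAlgHom Q (Algebra.ofId ℚ ℂ) z hz, AdjoinRoot.liftAlgHom_root Q (Algebra.ofId ℚ ℂ) z hz⟩

theorem roots_of_unity_of_root_and_power_root (d : ℕ) (hd : 1 ≤ d)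
    (P : Polynomial ℤ) (hP : IsGLZPoly P d) (hirr : Irreducible P)
    (a : ℂ) (ha1 : a ≠ 1) (ha2 : a ≠ -1)
    (k : ℤ) (hk0 : k ≠ 0) (hk1 : k ≠ 1) (hk2 : k ≠ -1)
    (hra : (P.map (Int.castRingHom ℂ)).IsRoot a)
    (hrak : (P.map (Int.castRingHom ℂ)).IsRoot (a ^ k)) :
    ∀ z : ℂ, (P.map (Int.castRingHom ℂ)).IsRoot z → ∃ n : ℕ, 0 < n ∧ z ^ n = 1 := by
  obtain ⟨hdeg, hlead, hc0⟩ := hP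
  have hP0 : P ≠ 0 := by
    intro h
    rcases hc0 with h1 | h1 <;> simp [h] at h1
  -- the rational polynomial
  set Q : Polynomial ℚ := P.map (Int.castRingHom ℚ) with hQdef
  have hQirr : Irreducible Q := by
    have hu : IsUnit P.leadingCoeff := by
      rw [hlead]; exact (IsUnit.neg isUnit_one).pow d
    have hprim : P.IsPrimitive := fun r hr =>
      isUnit_of_dvd_unit ((Polynomial.C_dvd_iff_dvd_coeff r P).mp hr P.natDegree) hu
    exact (Polynomial.IsPrimitive.Int.irreducible_iff_irreducible_map_cast hprim).mp hirr
  haveI : Fact (Irreducible Q) := ⟨hQirr⟩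
  -- translation between roots of P over ℂ and aeval of Q
  have hcomp : (algebraMap ℚ ℂ).comp (Int.castRingHom ℚ) = Int.castRingHom ℂ :=
    Subsingleton.elim _ _
  have key : ∀ z : ℂ, (P.map (Int.castRingHom ℂ)).IsRoot z ↔ Polynomial.aeval z Q = 0 := by
    intro z
    rw [Polynomial.aeval_def, hQdef, Polynomial.eval₂_eq_eval_map, Polynomial.map_map, hcomp]
    rfl
  -- the abstract root field
  set K := AdjoinRoot Q
  set x : K := AdjoinRoot.root Q with hxdef
  have hQa : Polynomial.aeval a Q = 0 := (key a).mp hra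
  obtain ⟨φa, hφax⟩ := exists_algHom_adjoinRoot Q a hQa
  rw [← hxdef] at hφax
  have hφainj : Function.Injective φa := φa.toRingHom.injective
  have ha0 : a ≠ 0 := by
    intro h
    have := (key a).mp hra
    rw [h] at this
    rw [show Polynomial.aeval (0 : ℂ) Q = algebraMap ℚ ℂ (Q.coeff 0) by
      simp [Polynomial.aeval_def, Polynomial.eval₂_at_zero]] at this
    have hQ0 : Q.coeff 0 = (P.coeff 0 : ℚ) := by simp [hQdef]
    rcases hc0 with h1 | h1 <;> rw [hQ0, h1] at this <;> norm_num at this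
  -- x^k is a root of Q in K
  have hxkQ : Polynomial.aeval (x ^ k) Q = 0 := by
    apply hφainj
    rw [map_zero, ← Polynomial.aeval_algHom_apply, map_zpow₀, hφax]
    exact (key (a ^ k)).mp hrak
  -- closure of the complex root set under z ↦ z^k
  have closure : ∀ z : ℂ, Polynomial.aeval z Q = 0 → Polynomial.aeval (z ^ k) Q = 0 := by
    intro z hz
    obtain ⟨φz, hφzx⟩ := exists_algHom_adjoinRoot Q z hz
    rw [← hxdef] at hφzx
    calc Polynomial.aeval (z ^ k) Q = Polynomial.aeval (φz (x ^ k)) Q := by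
          rw [map_zpow₀, hφzx]
      _ = φz (Polynomial.aeval (x ^ k) Q) := Polynomial.aeval_algHom_apply φz _ Q
      _ = 0 := by rw [hxkQ, map_zero]
  -- all a^(k^n) are roots
  have hiter : ∀ n : ℕ, Polynomial.aeval (a ^ (k ^ n)) Q = 0 := by
    intro n
    induction n with
    | zero => simpa using hQa
    | succ n ih =>
        have : a ^ (k ^ (n + 1)) = (a ^ (k ^ n)) ^ k := by
          rw [← zpow_mul, ← pow_succ]
        rw [this]
        exact closure _ ih
  -- finiteness of the root set gives a repetition
  have hQmap0 : Q.map (algebraMap ℚ ℂ) ≠ 0 := by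
    have : Q ≠ 0 := by
      intro h
      exact hP0 (Polynomial.map_injective _ (Int.cast_injective) (by simpa [hQdef] using h))
    exact (Polynomial.map_ne_zero_iff (algebraMap ℚ ℂ).injective).mpr this
  have hfin : Set.Finite {z : ℂ | Polynomial.aeval z Q = 0} := by
    have h := Polynomial.finite_setOf_isRoot hQmap0
    have he : {z : ℂ | Polynomial.aeval z Q = 0}
        = {z : ℂ | (Q.map (algebraMap ℚ ℂ)).IsRoot z} := by
      ext z
      simp only [Set.mem_setOf_eq, Polynomial.IsRoot, Polynomial.aeval_def,
        Polynomial.eval₂_eq_eval_map]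
    rw [he]
    exact h
  obtain ⟨m, -, n, -, hmn, heq⟩ :=
    Set.infinite_univ.exists_ne_map_eq_of_mapsTo
      (f := fun n : ℕ => a ^ (k ^ n))
      (fun n _ => hiter n) hfin
  -- derive a^N = 1 with N ≠ 0
  have hkN : k ^ m ≠ k ^ n := by
    intro h
    exact hmn (Int.pow_right_injective (by omega : 1 < k.natAbs) h)
  have haN : a ^ (k ^ m - k ^ n) = 1 := by
    rw [zpow_sub₀ ha0, heq, div_self (zpow_ne_zero _ ha0)]
  set N : ℤ := k ^ m - k ^ n with hNdef
  have hN0 : N ≠ 0 := sub_ne_zero.mpr hkN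
  have hnatpos : 0 < N.natAbs := Int.natAbs_pos.mpr hN0
  have hapow : a ^ (N.natAbs) = 1 := by
    rcases Int.natAbs_eq N with h | h
    · rw [← zpow_natCast, ← h, haN]
    · rw [← zpow_natCast, show ((N.natAbs : ℤ)) = -N by omega, zpow_neg, haN, inv_one]
  -- transfer to K: x ^ natAbs N = 1
  have hxpow : x ^ N.natAbs = 1 := by
    apply hφainj
    rw [map_pow, hφax, hapow, map_one]
  -- conclude for every root
  intro z hz
  refine ⟨N.natAbs, hnatpos, ?_⟩
  have hQz : Polynomial.aeval z Q = 0 := (key z).mp hz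
  obtain ⟨φz, hφzx⟩ := exists_algHom_adjoinRoot Q z hQz
  rw [← hxdef] at hφzx
  calc z ^ N.natAbs = φz (x ^ N.natAbs) := by rw [map_pow, hφzx]
    _ = 1 := by rw [hxpow, map_one]
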